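/- Let α ∈ (0,1), z₀ = z ∈ (0,1], and define z_{r} recursively by z_r = z_{r+1}(1 + 2^α z_{r+1}^α), i.e. z_{r+1} = E_α^{-1}(z_r) where E_α(x) = x(1+2^α x^α) on [0,1/2]. Then for all r ≥ 1: 1/(z₀^{−α} + r·α·2^α) ≤ z_r^α ≤ 1/(z₀^{−α} + r·α(1−α)·2^{α−1}). -/

import Mathlib

/-- Left branch of the LSV (Pomeau–Manneville type) map. -/
noncomputable def Ea (α x : ℝ) : ℝ := x * (1 + 2 ^ α * x ^ α)

open Real in
/-- Key step inequality: for `t ∈ (0,1]` and `α ∈ (0,1)`,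
`α*t/(1+t) ≤ 1 - (1+t)^(-α) ≤ α*t`. -/
lemma bernoulli_sandwich {α t : ℝ} (hα0 : 0 < α) (hα1 : α < 1)
    (ht0 : 0 < t) (ht1 : t ≤ 1) :
    α * t / (1 + t) ≤ 1 - (1 + t) ^ (-α) ∧ 1 - (1 + t) ^ (-α) ≤ α * t := by
  have h1t : (0:ℝ) < 1 + t := by linarith
  have hpow_pos : (0:ℝ) < (1 + t) ^ α := rpow_pos_of_pos h1t α
  have hneg : (1 + t) ^ (-α) = ((1 + t) ^ α)⁻¹ := by
    rw [Real.rpow_neg h1t.le]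
  constructor
  · -- lower bound: from (1+t)^(1-α) ≤ 1 + (1-α)*t
    have hb : (1 + t) ^ (1 - α) ≤ 1 + (1 - α) * t :=
      rpow_one_add_le_one_add_mul_self (by linarith) (by linarith) (by linarith)
    have hsplit : (1 + t) ^ (1 - α) = (1 + t) * (1 + t) ^ (-α) := by
      rw [← Real.rpow_one_add' h1t.le (by intro h; linarith)]
      ring_nf
    -- (1+t)^(-α) ≤ (1 + (1-α)t)/(1+t)
    have h2 : (1 + t) * (1 + t) ^ (-α) ≤ 1 + (1 - α) * t := by
      rw [← hsplit]; exact hb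
    have h3 : (1 + t) ^ (-α) ≤ (1 + (1 - α) * t) / (1 + t) := by
      rw [le_div_iff₀ h1t]; linarith [h2]
    have h4 : (1 + (1 - α) * t) / (1 + t) = 1 - α * t / (1 + t) := by
      field_simp; ring
    linarith [h3, h4 ▸ h3]
  · -- upper bound: from (1+t)^α ≤ 1 + α*t
    have hb : (1 + t) ^ α ≤ 1 + α * t :=
      rpow_one_add_le_one_add_mul_self (by linarith) hα0.le hα1.le
    have h5 : 1 - α * t ≤ (1 + t) ^ (-α) := by
      rcases le_or_gt (1 - α * t) 0 with h | h
      · exact h.trans (rpow_pos_of_pos h1t _).le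
      · rw [hneg, le_inv_comm₀ h hpow_pos]
        calc (1 + t) ^ α ≤ 1 + α * t := hb
          _ ≤ (1 - α * t)⁻¹ := by
              rw [inv_eq_one_div, le_div_iff₀ h]
              nlinarith [sq_nonneg (α * t)]
    linarith

theorem stmt3 (α z : ℝ) (hα : α ∈ Set.Ioo (0:ℝ) 1) (hz : z ∈ Set.Ioc (0:ℝ) 1)
    (Z : ℕ → ℝ) (hZ0 : Z 0 = z)
    (hrec : ∀ r : ℕ, Z r = Z (r + 1) * (1 + 2 ^ α * Z (r + 1) ^ α))
    (hmem : ∀ r : ℕ, 1 ≤ r → Z r ∈ Set.Ioc (0:ℝ) (1/2)) :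
    ∀ r : ℕ, 1 ≤ r →
      1 / (z ^ (-α) + r * α * 2 ^ α) ≤ Z r ^ α ∧
        Z r ^ α ≤ 1 / (z ^ (-α) + r * (α * (1 - α)) * 2 ^ (α - 1)) := by
  obtain ⟨hα0, hα1⟩ := hα
  obtain ⟨hz0, hz1⟩ := hz
  have h2pos : (0:ℝ) < 2 ^ α := Real.rpow_pos_of_pos two_pos α
  have h2pos' : (0:ℝ) < 2 ^ (α - 1) := Real.rpow_pos_of_pos two_pos _
  -- Positivity of all Z r
  have hZpos : ∀ r : ℕ, 0 < Z r := by
    intro r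
    cases r with
    | zero => rw [hZ0]; exact hz0
    | succ n => exact (hmem (n + 1) (Nat.le_add_left 1 n)).1
  -- step inequality for u_r = (Z r)^(-α)
  have hstep : ∀ r : ℕ,
      Z r ^ (-α) + α * (1 - α) * 2 ^ (α - 1) ≤ Z (r + 1) ^ (-α) ∧
      Z (r + 1) ^ (-α) ≤ Z r ^ (-α) + α * 2 ^ α := by
    intro r
    obtain ⟨hy0, hy1⟩ := hmem (r + 1) (Nat.le_add_left 1 r)
    set y := Z (r + 1) with hy
    set t := 2 ^ α * y ^ α with htdef
    have hyα : 0 < y ^ α := Real.rpow_pos_of_pos hy0 α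
    have ht0 : 0 < t := mul_pos h2pos hyα
    have ht1 : t ≤ 1 := by
      have : y ^ α ≤ (1/2 : ℝ) ^ α :=
        Real.rpow_le_rpow hy0.le hy1 hα0.le
      have h12 : (2:ℝ) ^ α * (1/2 : ℝ) ^ α = 1 := by
        rw [← Real.mul_rpow (by norm_num) (by norm_num)]
        norm_num
      calc t ≤ 2 ^ α * (1/2:ℝ) ^ α := by
              exact mul_le_mul_of_nonneg_left this h2pos.le
        _ = 1 := h12
    have h1t : (0:ℝ) < 1 + t := by linarith
    -- Z r ^ (-α) = y^(-α) * (1+t)^(-α)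
    have hZr : Z r = y * (1 + t) := hrec r
    have hsplit : Z r ^ (-α) = y ^ (-α) * (1 + t) ^ (-α) := by
      rw [hZr, Real.mul_rpow hy0.le h1t.le]
    -- y^(-α) = 2^α / t
    have hyinv : y ^ (-α) = 2 ^ α / t := by
      rw [Real.rpow_neg hy0.le, htdef]
      field_simp
    have hyinvpos : 0 < y ^ (-α) := Real.rpow_pos_of_pos hy0 _
    obtain ⟨hlow, hup⟩ := bernoulli_sandwich hα0 hα1 ht0 ht1
    -- difference
    have hdiff : y ^ (-α) - Z r ^ (-α) = (2 ^ α / t) * (1 - (1 + t) ^ (-α)) := by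
      rw [hsplit, hyinv]; ring
    constructor
    · -- lower bound for difference
      have : (2 ^ α / t) * (α * t / (1 + t)) ≤ (2 ^ α / t) * (1 - (1 + t) ^ (-α)) :=
        mul_le_mul_of_nonneg_left hlow (by positivity)
      have heq : (2 ^ α / t) * (α * t / (1 + t)) = 2 ^ α * α / (1 + t) := by
        field_simp
      have hge : 2 ^ α * α / 2 ≤ 2 ^ α * α / (1 + t) := by
        apply div_le_div_of_nonneg_left (by positivity) h1t (by linarith)
      have h2a : (2:ℝ) ^ (α - 1) = 2 ^ α / 2 := by
        rw [Real.rpow_sub two_pos]; norm_num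
      have hA : α * (1 - α) * 2 ^ (α - 1) ≤ 2 ^ α * α / 2 := by
        rw [h2a]
        have : α * (1 - α) ≤ α := by nlinarith
        calc α * (1 - α) * (2 ^ α / 2) ≤ α * (2 ^ α / 2) := by
              apply mul_le_mul_of_nonneg_right this (by positivity)
          _ = 2 ^ α * α / 2 := by ring
      nlinarith [hdiff, this, heq ▸ this]
    · have : (2 ^ α / t) * (1 - (1 + t) ^ (-α)) ≤ (2 ^ α / t) * (α * t) :=
        mul_le_mul_of_nonneg_left hup (by positivity)
      have heq : (2 ^ α / t) * (α * t) = α * 2 ^ α := by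
        field_simp
      nlinarith [hdiff, this, heq ▸ this]
  -- induction: bounds on u_r
  have hbounds : ∀ r : ℕ,
      z ^ (-α) + r * (α * (1 - α)) * 2 ^ (α - 1) ≤ Z r ^ (-α) ∧
      Z r ^ (-α) ≤ z ^ (-α) + r * α * 2 ^ α := by
    intro r
    induction r with
    | zero => simp [hZ0]
    | succ n ih =>
      obtain ⟨ih1, ih2⟩ := ih
      obtain ⟨s1, s2⟩ := hstep n
      constructor
      · push_cast; nlinarith [s1, ih1]
      · push_cast; nlinarith [s2, ih2]
  intro r hr
  obtain ⟨hb1, hb2⟩ := hbounds r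
  have hZr0 := hZpos r
  have hposα : 0 < Z r ^ α := Real.rpow_pos_of_pos hZr0 α
  have hinv : Z r ^ (-α) = (Z r ^ α)⁻¹ := Real.rpow_neg hZr0.le α
  have hzinv : 0 < z ^ (-α) := Real.rpow_pos_of_pos hz0 _
  have hApos : 0 < z ^ (-α) + r * (α * (1 - α)) * 2 ^ (α - 1) := by
    have : (0:ℝ) ≤ r * (α * (1 - α)) * 2 ^ (α - 1) :=
      mul_nonneg (mul_nonneg (Nat.cast_nonneg r) (by nlinarith)) h2pos'.le
    linarith
  have hBpos : 0 < z ^ (-α) + r * α * 2 ^ α := by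
    have : (0:ℝ) ≤ r * α * 2 ^ α := by positivity
    linarith
  constructor
  · rw [one_div, inv_le_comm₀ hBpos hposα, ← hinv]
    exact hb2
  · rw [one_div, le_inv_comm₀ hposα hApos, ← hinv]
    exact hb1
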